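/- In the Generalized Alpha Investing procedure, the process A(j) = α·R(j) − V(j) + α·η − W(j) is a sub-martingale with respect to the filtration generated by the rejection indicators: E[A(j) − A(j-1) | R_1, …, R_{j-1}] ≥ 0 for every j. -/

import Mathlib

open MeasureTheory

/-- The event that the rejection history of the first `j-1` tests equals the
outcome pattern `r` (rejection indicators take values in `{0,1}`). -/
def histEvent {Ω : Type*} (R : ℕ → Ω → ℝ) (j : ℕ) (r : ℕ → Bool) : Set Ω :=
  {ω | ∀ i, 1 ≤ i → i < j → R i ω = if r i then 1 else 0}

/-- The Generalized Alpha Investing process `A(j) = α·R(j) − V(j) + αη − W(j)` is a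
sub-martingale with respect to the filtration generated by the rejection
indicators: conditionally on any rejection history `r` of the first `j-1` tests,
the expected increment `A(j) − A(j-1)` is nonnegative, i.e. the integral of
`A(j)` over the history event dominates that of `A(j-1)`. -/
theorem gai_process_submartingale
    {Ω : Type*} [MeasurableSpace Ω] (μ : Measure Ω) [IsProbabilityMeasure μ]
    (α η : ℝ) (hα0 : 0 < α) (hα1 : α < 1)
    (R V : ℕ → Ω → ℝ) (W : ℕ → Ω → ℝ)
    (isNull : Bool) (j : ℕ) (hj : 1 ≤ j) (r : ℕ → Bool)
    (φ ψ αl ρ : ℝ)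
    (hRmeas : ∀ i, Measurable (R i))
    (hR01 : ∀ i ω, R i ω = 0 ∨ R i ω = 1)
    (hVj : ∀ ω, V j ω = if isNull then R j ω else 0)
    (hV0 : ∀ i, i ≠ j → ∀ ω, V i ω = 0 ∨ V i ω = R i ω)
    (hαl0 : 0 < αl) (hαl1 : αl < 1)
    (hρ0 : 0 < ρ) (hρ1 : ρ ≤ 1)
    (hφ : 0 ≤ φ)
    (hψ0 : 0 ≤ ψ) (hψle : ψ ≤ min (φ / ρ + α) (φ / αl + α - 1))
    (hupd : ∀ ω ∈ histEvent R j r, W j ω = W (j - 1) ω - φ + R j ω * ψ)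
    (hWint : ∀ i, IntegrableOn (W i) (histEvent R j r) μ)
    (hcondNull : isNull = true →
      μ ({ω | R j ω = 1} ∩ histEvent R j r) ≤
        ENNReal.ofReal αl * μ (histEvent R j r))
    (hcondAlt : isNull = false →
      μ ({ω | R j ω = 1} ∩ histEvent R j r) ≤
        ENNReal.ofReal ρ * μ (histEvent R j r)) :
    ∫ ω in histEvent R j r,
        (α * (∑ i ∈ Finset.Icc 1 (j - 1), R i ω)
          - (∑ i ∈ Finset.Icc 1 (j - 1), V i ω) + α * η - W (j - 1) ω) ∂μ ≤
      ∫ ω in histEvent R j r,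
        (α * (∑ i ∈ Finset.Icc 1 j, R i ω)
          - (∑ i ∈ Finset.Icc 1 j, V i ω) + α * η - W j ω) ∂μ := by

  classical
  obtain ⟨k, rfl⟩ : ∃ k, j = k + 1 := ⟨j - 1, (Nat.succ_pred_eq_of_pos hj).symm⟩
  set E := histEvent R (k + 1) r with hEdef
  have hE : MeasurableSet E := by
    have hEq : E = ⋂ i, ⋂ (_ : 1 ≤ i), ⋂ (_ : i < k + 1),
        R i ⁻¹' {if r i then (1:ℝ) else 0} := by
      ext ω
      simp [hEdef, histEvent, Set.mem_iInter]
    rw [hEq]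
    exact MeasurableSet.iInter fun i => MeasurableSet.iInter fun _ =>
      MeasurableSet.iInter fun _ => (hRmeas i) (measurableSet_singleton _)
  set A : Set Ω := {ω | R (k + 1) ω = 1} with hAdef
  have hA : MeasurableSet A := by
    have : A = R (k + 1) ⁻¹' {1} := rfl
    rw [this]; exact (hRmeas (k + 1)) (measurableSet_singleton _)
  set κ : ℝ := if isNull then αl else ρ with hκdef
  set c : ℝ := α - (if isNull then (1:ℝ) else 0) - ψ with hcdef
  have hκ0 : 0 < κ := by cases isNull <;> simp [hκdef, hαl0, hρ0]
  have hmin1 : ψ ≤ φ / ρ + α := le_trans hψle (min_le_left _ _)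
  have hmin2 : ψ ≤ φ / αl + α - 1 := le_trans hψle (min_le_right _ _)
  have hc' : -φ / κ ≤ c := by
    rw [hκdef, hcdef]
    cases isNull <;> norm_num <;> rw [neg_div] <;> linarith
  have hcκ : -φ ≤ c * κ := by
    have := mul_le_mul_of_nonneg_right hc' hκ0.le
    rw [div_mul_cancel₀ _ (ne_of_gt hκ0)] at this
    linarith
  have hcond : μ (A ∩ E) ≤ ENNReal.ofReal κ * μ E := by
    cases hb : isNull
    · simpa [hκdef, hb] using hcondAlt hb
    · simpa [hκdef, hb] using hcondNull hb
  -- real-valued measures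
  set m : ℝ := (μ (A ∩ E)).toReal with hmdef
  set μE : ℝ := (μ E).toReal with hμEdef
  have hμE0 : 0 ≤ μE := ENNReal.toReal_nonneg
  have hm0 : 0 ≤ m := ENNReal.toReal_nonneg
  have hm : m ≤ κ * μE := by
    have hfin : ENNReal.ofReal κ * μ E ≠ ⊤ :=
      ENNReal.mul_ne_top ENNReal.ofReal_ne_top (measure_ne_top μ E)
    have := ENNReal.toReal_mono hfin hcond
    rwa [ENNReal.toReal_mul, ENNReal.toReal_ofReal hκ0.le] at this
  -- integrability of R (k+1) on E
  have hRjInt : IntegrableOn (R (k + 1)) E μ := by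
    refine Integrable.mono' (integrable_const (1 : ℝ))
      ((hRmeas (k + 1)).aestronglyMeasurable) (Filter.Eventually.of_forall fun ω => ?_)
    rcases hR01 (k + 1) ω with h | h <;> simp [h]
  have hhInt : IntegrableOn (fun ω => c * R (k + 1) ω + φ) E μ :=
    (hRjInt.const_mul c).add (integrable_const φ)
  have hIRj : ∫ ω in E, R (k + 1) ω ∂μ = m := by
    have hfun : (fun ω => R (k + 1) ω) = A.indicator (fun _ => (1 : ℝ)) := by
      funext ω
      rcases hR01 (k + 1) ω with h | h
      · have : ω ∉ A := by simp [hAdef, h]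
        simp [Set.indicator, this, h]
      · have : ω ∈ A := by simp [hAdef, h]
        simp [Set.indicator, this, h]
    rw [hfun, setIntegral_indicator hA, setIntegral_const, Set.inter_comm]
    simp [hmdef, Measure.real]
  have hIh : ∫ ω in E, (c * R (k + 1) ω + φ) ∂μ = c * m + φ * μE := by
    rw [integral_add (hRjInt.const_mul c) (integrable_const φ),
      integral_const_mul, hIRj, setIntegral_const]
    simp [hμEdef, mul_comm, Measure.real]
  have hh0 : 0 ≤ ∫ ω in E, (c * R (k + 1) ω + φ) ∂μ := by
    rw [hIh]
    rcases le_or_gt 0 c with h | h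
    · nlinarith
    · have h1 : c * (κ * μE) ≤ c * m := mul_le_mul_of_nonpos_left hm h.le
      have h2 : -φ * μE ≤ c * κ * μE := mul_le_mul_of_nonneg_right hcκ hμE0
      nlinarith
  -- pointwise decomposition on E
  have hsplit : Set.EqOn
      (fun ω => α * (∑ i ∈ Finset.Icc 1 (k + 1), R i ω)
        - (∑ i ∈ Finset.Icc 1 (k + 1), V i ω) + α * η - W (k + 1) ω)
      (fun ω => (α * (∑ i ∈ Finset.Icc 1 (k + 1 - 1), R i ω)
        - (∑ i ∈ Finset.Icc 1 (k + 1 - 1), V i ω) + α * η - W (k + 1 - 1) ω)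
        + (c * R (k + 1) ω + φ)) E := by
    intro ω hω
    have h1 := hupd ω hω
    have h2 := hVj ω
    simp only [Nat.add_sub_cancel] at h1 ⊢
    rw [Finset.sum_Icc_succ_top (by omega : 1 ≤ k + 1),
      Finset.sum_Icc_succ_top (by omega : 1 ≤ k + 1), h1, h2]
    cases isNull <;> simp [hcdef] <;> ring
  have hcongr : ∫ ω in E,
      (α * (∑ i ∈ Finset.Icc 1 (k + 1), R i ω)
        - (∑ i ∈ Finset.Icc 1 (k + 1), V i ω) + α * η - W (k + 1) ω) ∂μ
      = ∫ ω in E,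
      ((α * (∑ i ∈ Finset.Icc 1 (k + 1 - 1), R i ω)
        - (∑ i ∈ Finset.Icc 1 (k + 1 - 1), V i ω) + α * η - W (k + 1 - 1) ω)
        + (c * R (k + 1) ω + φ)) ∂μ :=
    setIntegral_congr_fun hE hsplit
  by_cases hf : IntegrableOn (fun ω =>
      α * (∑ i ∈ Finset.Icc 1 (k + 1 - 1), R i ω)
        - (∑ i ∈ Finset.Icc 1 (k + 1 - 1), V i ω) + α * η - W (k + 1 - 1) ω) E μ
  · rw [hcongr, integral_add hf hhInt]
    linarith
  · have hg : ¬ IntegrableOn (fun ω =>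
        α * (∑ i ∈ Finset.Icc 1 (k + 1), R i ω)
          - (∑ i ∈ Finset.Icc 1 (k + 1), V i ω) + α * η - W (k + 1) ω) E μ := by
      intro hgint
      apply hf
      have h1 : IntegrableOn (fun ω =>
          (α * (∑ i ∈ Finset.Icc 1 (k + 1), R i ω)
            - (∑ i ∈ Finset.Icc 1 (k + 1), V i ω) + α * η - W (k + 1) ω)
          - (c * R (k + 1) ω + φ)) E μ := hgint.sub hhInt
      refine h1.congr_fun ?_ hE
      intro ω hω
      have := hsplit hω
      simp only at this ⊢
      rw [this]; ring
    rw [integral_undef hf, integral_undef hg]
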